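/- (De Giorgi iteration lemma.) Let α > 0, C > 0 and B > 1, and let (x_i)_{i≥0} be a sequence of positive real numbers satisfying x_{i+1} ≤ C·B^i·x_i^{1+α} for all i ≥ 0. If x_0 ≤ C^{−1/α}·B^{−1/α²}, then lim_{i→∞} x_i = 0. -/

import Mathlib

open Filter

/-- **De Giorgi iteration lemma**: if `x_{i+1} ≤ C B^i x_i^{1+α}` with `B > 1`,
`C > 0`, `α > 0`, and `x₀ ≤ C^{−1/α} B^{−1/α²}`, then `x_i → 0`. -/
theorem deGiorgi_iteration
    (α C B : ℝ) (hα : 0 < α) (hC : 0 < C) (hB : 1 < B)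
    (x : ℕ → ℝ) (hx : ∀ i, 0 < x i)
    (hrec : ∀ i, x (i + 1) ≤ C * B ^ i * x i ^ (1 + α))
    (h0 : x 0 ≤ C ^ (-(1 / α)) * B ^ (-(1 / α ^ 2))) :
    Tendsto x atTop (nhds 0) := by
  have hB0 : (0:ℝ) < B := lt_trans one_pos hB
  have hα2 : (0:ℝ) < α ^ 2 := by positivity
  have key : ∀ i : ℕ, x i ≤ C ^ (-(1/α)) * B ^ (-(1/α^2) - (i:ℝ)/α) := by
    intro i
    induction i with
    | zero => simpa using h0
    | succ i ih =>
      have h1α : (0:ℝ) < 1 + α := by linarith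
      rw [show ((i+1:ℕ):ℝ) = (i:ℝ)+1 by push_cast; ring]
      calc x (i+1) ≤ C * B ^ i * x i ^ (1+α) := hrec i
        _ ≤ C * B ^ i * (C ^ (-(1/α)) * B ^ (-(1/α^2) - (i:ℝ)/α)) ^ (1+α) :=
            mul_le_mul_of_nonneg_left (Real.rpow_le_rpow (hx i).le ih h1α.le) (by positivity)
        _ = C ^ (-(1/α)) * B ^ (-(1/α^2) - ((i:ℝ)+1)/α) := by
            rw [Real.mul_rpow (by positivity) (by positivity),
              ← Real.rpow_natCast B i, ← Real.rpow_mul hC.le, ← Real.rpow_mul hB0.le]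
            rw [show C * B ^ (i:ℝ) * (C ^ (-(1/α) * (1+α)) * B ^ ((-(1/α^2) - (i:ℝ)/α) * (1+α)))
                = (C ^ (1:ℝ) * C ^ (-(1/α) * (1+α))) *
                  (B ^ (i:ℝ) * B ^ ((-(1/α^2) - (i:ℝ)/α) * (1+α))) by
                rw [Real.rpow_one]; ring]
            rw [← Real.rpow_add hC, ← Real.rpow_add hB0]
            congr 1
            · congr 1
              field_simp
              ring
            · congr 1
              field_simp
              ring
  have hr : B ^ (-(1/α)) < 1 := Real.rpow_lt_one_of_one_lt_of_neg hB (neg_lt_zero.mpr (by positivity))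
  have hr0 : 0 < B ^ (-(1/α)) := Real.rpow_pos_of_pos hB0 _
  have hlim : Tendsto (fun i : ℕ => (C ^ (-(1/α)) * B ^ (-(1/α^2))) * (B ^ (-(1/α))) ^ i)
      atTop (nhds 0) := by
    have h2 := (tendsto_pow_atTop_nhds_zero_of_lt_one hr0.le hr).const_mul
      (C ^ (-(1/α)) * B ^ (-(1/α^2)))
    rw [mul_zero] at h2
    exact h2
  refine squeeze_zero (fun i => (hx i).le) (fun i => ?_) hlim
  calc x i ≤ C ^ (-(1/α)) * B ^ (-(1/α^2) - (i:ℝ)/α) := key i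
    _ = (C ^ (-(1/α)) * B ^ (-(1/α^2))) * (B ^ (-(1/α))) ^ i := by
        rw [show -(1/α^2) - (i:ℝ)/α = -(1/α^2) + (-(1/α)) * (i:ℝ) by ring,
          Real.rpow_add hB0, Real.rpow_mul hB0.le, Real.rpow_natCast]
        ring
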